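/- arXiv:2412.00376 — 2 statements merged into one kernel-verified Lean document; each statement's English description precedes it below -/
import Mathlib

section
/- Let α ∈ (1,2) and 0 < β < 1. Then ∫_0^∞ [(1+z)^β − 1 − βz] μ_α(dz) = −β(1−β)Γ(α−β)/(Γ(α)Γ(2−β)). -/
open MeasureTheory Set Real

open Filter


lemma betaOoo {a b : ℝ} (ha : 0 < a) (hb : 0 < b) :
    ∫ x in Ioo (0:ℝ) 1, x ^ (a - 1) * (1 - x) ^ (b - 1)
      = Real.Gamma a * Real.Gamma b / Real.Gamma (a + b) := by
  have h := Complex.Gamma_mul_Gamma_eq_betaIntegral (s := (a:ℂ)) (t := (b:ℂ))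
    (by simpa using ha) (by simpa using hb)
  rw [Complex.betaIntegral] at h
  have hre : (∫ x in (0:ℝ)..1, (x:ℂ) ^ ((a:ℂ) - 1) * ((1:ℂ) - x) ^ ((b:ℂ) - 1))
      = ((∫ x in (0:ℝ)..1, x ^ (a - 1) * (1 - x) ^ (b - 1) : ℝ) : ℂ) := by
    rw [← intervalIntegral.integral_ofReal]
    refine intervalIntegral.integral_congr fun x hx => ?_
    rw [uIcc_of_le (by norm_num)] at hx
    obtain ⟨hx0, hx1⟩ := hx
    push_cast
    rw [Complex.ofReal_cpow hx0 (a-1), Complex.ofReal_cpow (by linarith : (0:ℝ) ≤ 1 - x) (b-1)]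
    push_cast
    ring
  rw [hre] at h
  have hGa : Complex.Gamma a = ((Real.Gamma a : ℝ) : ℂ) := (Complex.Gamma_ofReal a)
  have hGb : Complex.Gamma b = ((Real.Gamma b : ℝ) : ℂ) := (Complex.Gamma_ofReal b)
  rw [hGa, hGb, show (a:ℂ)+(b:ℂ) = ((a+b : ℝ):ℂ) by push_cast; ring, Complex.Gamma_ofReal] at h
  have hne : Real.Gamma (a+b) ≠ 0 := (Real.Gamma_pos_of_pos (by linarith)).ne'
  have := congrArg Complex.re h
  simp only [← Complex.ofReal_mul, Complex.ofReal_re] at this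
  rw [intervalIntegral.integral_of_le (by norm_num : (0:ℝ) ≤ 1),
    integral_Ioc_eq_integral_Ioo] at this
  rw [eq_div_iff hne]
  linarith [this]


lemma betaOooInt {a b : ℝ} (ha : 0 < a) (hb : 0 < b) :
    IntegrableOn (fun x : ℝ => x ^ (a - 1) * (1 - x) ^ (b - 1)) (Ioo 0 1) := by
  have h := (Complex.betaIntegral_convergent (u := (a:ℂ)) (v := (b:ℂ))
    (by simpa using ha) (by simpa using hb))
  rw [intervalIntegrable_iff_integrableOn_Ioc_of_le (by norm_num)] at h
  have h2 := MeasureTheory.IntegrableOn.mono_set (h.norm) Ioo_subset_Ioc_self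
  refine (IntegrableOn.congr_fun h2 ?_ measurableSet_Ioo)
  intro x hx
  obtain ⟨hx0, hx1⟩ := hx
  simp only [norm_mul]
  rw [Complex.norm_cpow_eq_rpow_re_of_pos hx0,
    show ((1:ℂ) - x) = ((1 - x : ℝ) : ℂ) by push_cast; ring,
    Complex.norm_cpow_eq_rpow_re_of_pos (by linarith)]
  norm_num

lemma image_self_div_one_sub : (fun x : ℝ => x / (1 - x)) '' Ioo 0 1 = Ioi 0 := by
  ext t
  constructor
  · rintro ⟨x, ⟨hx0, hx1⟩, rfl⟩
    exact div_pos hx0 (by linarith)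
  · intro ht
    refine ⟨t / (1 + t), ⟨div_pos ht (by linarith [ht.out]), ?_⟩, ?_⟩
    · rw [div_lt_one (by linarith [ht.out])]; linarith [ht.out]
    · have h1 : (1:ℝ) + t ≠ 0 := by have := ht.out; positivity
      field_simp
      ring

lemma deriv_self_div_one_sub {x : ℝ} (hx : x ∈ Ioo (0:ℝ) 1) :
    HasDerivWithinAt (fun x : ℝ => x / (1 - x)) ((1 - x)⁻¹ ^ 2) (Ioo 0 1) x := by
  obtain ⟨hx0, hx1⟩ := hx
  have hne : (1:ℝ) - x ≠ 0 := by linarith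
  have h : HasDerivAt (fun y : ℝ => y / (1 - y))
      ((1 * (1 - x) - x * (0 - 1)) / (1 - x) ^ 2) x :=
    (hasDerivAt_id x).div ((hasDerivAt_const x (1:ℝ)).sub (hasDerivAt_id x)) hne
  have he : (1 * (1 - x) - x * (0 - 1)) / (1 - x) ^ 2 = (1 - x)⁻¹ ^ 2 := by
    field_simp
    ring
  rw [he] at h
  exact h.hasDerivWithinAt

lemma injOn_self_div_one_sub : InjOn (fun x : ℝ => x / (1 - x)) (Ioo 0 1) := by
  intro x ⟨hx0, hx1⟩ y ⟨hy0, hy1⟩ h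
  have hx' : (1:ℝ) - x ≠ 0 := by linarith
  have hy' : (1:ℝ) - y ≠ 0 := by linarith
  field_simp at h
  linarith

lemma betaIoi {a b : ℝ} (ha : 0 < a) (hb : 0 < b) :
    (∫ t in Ioi (0:ℝ), t ^ (a - 1) * (1 + t) ^ (-(a + b))
      = Real.Gamma a * Real.Gamma b / Real.Gamma (a + b))
    ∧ IntegrableOn (fun t : ℝ => t ^ (a - 1) * (1 + t) ^ (-(a + b))) (Ioi 0) := by
  have key : ∀ x ∈ Ioo (0:ℝ) 1,
      |(1 - x)⁻¹ ^ 2| • ((fun t : ℝ => t ^ (a - 1) * (1 + t) ^ (-(a + b))) (x / (1 - x)))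
        = x ^ (a - 1) * (1 - x) ^ (b - 1) := by
    intro x ⟨hx0, hx1⟩
    have h1 : (0:ℝ) < 1 - x := by linarith
    have h2 : (1:ℝ) + x / (1 - x) = (1 - x)⁻¹ := by field_simp; ring
    simp only [smul_eq_mul]
    have e1 : (1-x)⁻¹ ^ 2 = (1 - x) ^ (-2 : ℝ) := by
      rw [inv_pow, Real.rpow_neg h1.le, inv_inj,
        show ((2:ℝ)) = ((2:ℕ):ℝ) by norm_num, Real.rpow_natCast]
    have e2 : ((1-x)⁻¹) ^ (-(a+b)) = (1-x) ^ (a+b) := by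
      rw [← Real.rpow_neg_one (1 - x), ← Real.rpow_mul h1.le]
      norm_num
    have e3 : (x/(1-x)) ^ (a-1) = x ^ (a-1) * (1-x) ^ (-(a-1)) := by
      rw [Real.div_rpow hx0.le h1.le, Real.rpow_neg h1.le, div_eq_mul_inv]
    have e4 : (1-x) ^ (-2:ℝ) * ((1-x) ^ (-(a-1)) * (1-x) ^ (a+b)) = (1-x) ^ (b-1) := by
      rw [← Real.rpow_add h1, ← Real.rpow_add h1]
      ring_nf
    rw [abs_of_nonneg (by positivity), h2, e1, e2, e3, ← e4]
    ring
  constructor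
  · rw [← image_self_div_one_sub,
      integral_image_eq_integral_abs_deriv_smul measurableSet_Ioo
        (fun x hx => deriv_self_div_one_sub hx) injOn_self_div_one_sub]
    rw [setIntegral_congr_fun measurableSet_Ioo key]
    exact betaOoo ha hb
  · rw [← image_self_div_one_sub,
      integrableOn_image_iff_integrableOn_abs_deriv_smul measurableSet_Ioo
        (fun x hx => deriv_self_div_one_sub hx) injOn_self_div_one_sub]
    exact (betaOooInt ha hb).congr_fun (fun x hx => (key x hx).symm) measurableSet_Ioo


lemma hasDerivAt_one_add_rpow (p : ℝ) {t : ℝ} (ht : -1 < t) :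
    HasDerivAt (fun s : ℝ => (1+s) ^ p) (p * (1+t) ^ (p-1)) t := by
  have h := (Real.hasDerivAt_rpow_const (x := 1+t) (p := p)
    (Or.inl (by linarith))).comp t ((hasDerivAt_id t).const_add 1)
  simpa [Function.comp_def] using h

lemma cont_one_add_rpow (p : ℝ) {s : Set ℝ} (hs : ∀ x ∈ s, (0:ℝ) ≤ x) :
    ContinuousOn (fun t : ℝ => (1+t) ^ p) s :=
  (continuousOn_const.add continuousOn_id).rpow_const
    (fun x hx => Or.inl (by have := hs x hx; intro h; simp at h; linarith))

lemma one_add_rpow_lb {β : ℝ} (hβ₀ : 0 < β) (hβ : β < 1) {t : ℝ} (ht : 0 ≤ t) :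
    1 + (β-1)*t ≤ (1+t) ^ (β-1) := by
  have hFTC := intervalIntegral.integral_eq_sub_of_hasDerivAt
    (f := fun s : ℝ => (1+s) ^ (β-1)) (f' := fun s : ℝ => (β-1) * (1+s) ^ (β-1-1))
    (a := 0) (b := t)
    (fun x hx => by
      rw [uIcc_of_le ht] at hx
      exact hasDerivAt_one_add_rpow (β-1) (by linarith [hx.1]))
    (((continuousOn_const).mul (cont_one_add_rpow (β-1-1)
      (fun x hx => by rw [uIcc_of_le ht] at hx; exact hx.1))).intervalIntegrable)
  have hmono : (β-1) * t ≤ ∫ s in (0:ℝ)..t, (β-1) * (1+s) ^ (β-1-1) := by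
    have h0 : (∫ s in (0:ℝ)..t, (β-1 : ℝ)) = (β-1) * t := by simp; ring
    rw [← h0]
    refine intervalIntegral.integral_mono_on ht
      (intervalIntegrable_const)
      (((continuousOn_const).mul (cont_one_add_rpow (β-1-1)
        (fun x hx => by rw [uIcc_of_le ht] at hx; exact hx.1))).intervalIntegrable.mono_set
        (by rw [uIcc_of_le ht]))
      (fun x hx => ?_)
    have h1 : (1+x) ^ (β-1-1) ≤ 1 :=
      Real.rpow_le_one_of_one_le_of_nonpos (by linarith [hx.1]) (by linarith)
    nlinarith [Real.rpow_nonneg (by linarith [hx.1] : (0:ℝ) ≤ 1+x) (β-1-1)]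
  rw [hFTC] at hmono
  simp only [add_zero] at hmono
  rw [Real.one_rpow] at hmono
  linarith

lemma uprime_bounds {β : ℝ} (hβ₀ : 0 < β) (hβ : β < 1) {t : ℝ} (ht : 0 ≤ t) :
    -t ≤ β*((1+t)^(β-1) - 1) ∧ β*((1+t)^(β-1) - 1) ≤ 0 ∧ -β ≤ β*((1+t)^(β-1) - 1) := by
  have h1 : (1+t) ^ (β-1) ≤ 1 :=
    Real.rpow_le_one_of_one_le_of_nonpos (by linarith) (by linarith)
  have h2 := one_add_rpow_lb hβ₀ hβ ht
  have h3 : (0:ℝ) ≤ (1+t) ^ (β-1) := Real.rpow_nonneg (by linarith) _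
  refine ⟨?_, ?_, ?_⟩ <;> nlinarith

lemma f_bounds {β : ℝ} (hβ₀ : 0 < β) (hβ : β < 1) {t : ℝ} (ht : 0 ≤ t) :
    -(t^2) ≤ (1+t)^β - 1 - β*t ∧ (1+t)^β - 1 - β*t ≤ 0 := by
  have hFTC := intervalIntegral.integral_eq_sub_of_hasDerivAt
    (f := fun s : ℝ => (1+s) ^ β - 1 - β * s) (f' := fun s : ℝ => β * (1+s) ^ (β-1) - β)
    (a := 0) (b := t)
    (fun x hx => by
      rw [uIcc_of_le ht] at hx
      exact ((hasDerivAt_one_add_rpow β (by linarith [hx.1])).sub_const 1).sub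
        (by simpa using (hasDerivAt_id x).const_mul β))
    ((((continuousOn_const).mul (cont_one_add_rpow (β-1)
      (fun x hx => by rw [uIcc_of_le ht] at hx; exact hx.1))).sub
        continuousOn_const).intervalIntegrable)
  have hI : IntervalIntegrable (fun s : ℝ => β * (1+s) ^ (β-1) - β) volume 0 t :=
    (((continuousOn_const).mul (cont_one_add_rpow (β-1)
      (fun x hx => by rw [uIcc_of_le ht] at hx; exact hx.1))).sub
        continuousOn_const).intervalIntegrable
  simp only [add_zero, Real.one_rpow, mul_zero] at hFTC
  constructor
  · have hmono : (∫ s in (0:ℝ)..t, (-s)) ≤ ∫ s in (0:ℝ)..t, β * (1+s) ^ (β-1) - β := by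
      refine intervalIntegral.integral_mono_on ht
        ((continuousOn_id.neg).intervalIntegrable) hI (fun x hx => ?_)
      have := (uprime_bounds hβ₀ hβ hx.1).1
      linarith [this]
    have h0 : (∫ s in (0:ℝ)..t, (-s)) = -(t^2/2) := by
      rw [intervalIntegral.integral_neg, integral_id]
      norm_num
    rw [h0, hFTC] at hmono
    nlinarith
  · have hmono : (∫ s in (0:ℝ)..t, β * (1+s) ^ (β-1) - β) ≤ ∫ s in (0:ℝ)..t, (0:ℝ) := by
      refine intervalIntegral.integral_mono_on ht hI intervalIntegrable_const (fun x hx => ?_)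
      have := (uprime_bounds hβ₀ hβ hx.1).2.1
      linarith [this]
    rw [hFTC, intervalIntegral.integral_zero] at hmono
    linarith


lemma integrableOn_of_bounds {g : ℝ → ℝ} (hc : ContinuousOn g (Ioi 0))
    {C₁ C₂ p₁ p₂ : ℝ} (hp₁ : -1 < p₁) (hp₂ : p₂ < -1)
    (h₁ : ∀ z ∈ Ioc (0:ℝ) 1, |g z| ≤ C₁ * z ^ p₁)
    (h₂ : ∀ z ∈ Ioi (1:ℝ), |g z| ≤ C₂ * z ^ p₂) :
    IntegrableOn g (Ioi 0) := by
  rw [← Ioc_union_Ioi_eq_Ioi (zero_le_one)]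
  refine IntegrableOn.union ?_ ?_
  · refine Integrable.mono' (g := fun z => C₁ * z ^ p₁)
      (((intervalIntegral.intervalIntegrable_rpow' hp₁ (a := 0) (b := 1)).1).const_mul C₁)
      ((hc.mono Ioc_subset_Ioi_self).aestronglyMeasurable measurableSet_Ioc) ?_
    rw [ae_restrict_iff' measurableSet_Ioc]
    exact ae_of_all _ fun z hz => by simpa [Real.norm_eq_abs] using h₁ z hz
  · refine Integrable.mono' (g := fun z => C₂ * z ^ p₂)
      ((integrableOn_Ioi_rpow_of_lt hp₂ one_pos).const_mul C₂)
      ((hc.mono (Ioi_subset_Ioi zero_le_one)).aestronglyMeasurable measurableSet_Ioi) ?_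
    rw [ae_restrict_iff' measurableSet_Ioi]
    exact ae_of_all _ fun z hz => by simpa [Real.norm_eq_abs] using h₂ z hz

/-- Lemma 3.2, fourth identity: for `α ∈ (1,2)` and `0 < β < 1`,
`∫_0^∞ [(1+z)^β − 1 − βz] μ_α(dz) = −β(1−β)Γ(α−β)/(Γ(α)Γ(2−β))`, where
`μ_α(dz) = (α(α−1)/(Γ(α)Γ(2−α))) z^{−1−α} dz` on `(0,∞)`. -/
theorem stable_measure_integral_four (α β : ℝ) (hα₁ : 1 < α) (hα₂ : α < 2)
    (hβ₀ : 0 < β) (hβ : β < 1) :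
    ∫ z in Ioi (0 : ℝ),
        ((1 + z) ^ β - 1 - β * z) *
          (α * (α - 1) / (Real.Gamma α * Real.Gamma (2 - α)) * z ^ (-1 - α))
      = -(β * (1 - β) * Real.Gamma (α - β) / (Real.Gamma α * Real.Gamma (2 - β))) := by
  have hα0 : (0:ℝ) < α := by linarith
  have h1α : (1:ℝ) - α ≠ 0 := by intro h; linarith
  set c : ℝ := α * (α - 1) / (Real.Gamma α * Real.Gamma (2 - α)) with hc
  set f : ℝ → ℝ := fun z => (1+z) ^ β - 1 - β * z with hf
  set f' : ℝ → ℝ := fun z => β * (1+z) ^ (β-1) - β with hf'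
  set f'' : ℝ → ℝ := fun z => β * (β-1) * (1+z) ^ (β-2) with hf''
  set v : ℝ → ℝ := fun z => z ^ (-α) / (-α) with hv
  set v' : ℝ → ℝ := fun z => z ^ (-1-α) with hv'
  set w : ℝ → ℝ := fun z => z ^ (1-α) / (1-α) with hw
  set w' : ℝ → ℝ := fun z => z ^ (-α) with hw'
  have vapp : ∀ z : ℝ, v z = z ^ (-α) / (-α) := fun _ => rfl
  have v'app : ∀ z : ℝ, v' z = z ^ (-1-α) := fun _ => rfl
  have wapp : ∀ z : ℝ, w z = z ^ (1-α) / (1-α) := fun _ => rfl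
  have w'app : ∀ z : ℝ, w' z = z ^ (-α) := fun _ => rfl
  have fapp : ∀ z : ℝ, f z = (1+z) ^ β - 1 - β * z := fun _ => rfl
  have f'app : ∀ z : ℝ, f' z = β * (1+z) ^ (β-1) - β := fun _ => rfl
  have f''app : ∀ z : ℝ, f'' z = β * (β-1) * (1+z) ^ (β-2) := fun _ => rfl
  -- derivatives
  have hdf : ∀ z ∈ Ioi (0:ℝ), HasDerivAt f (f' z) z := by
    intro z hz
    have h0 : (-1:ℝ) < z := by linarith [hz.out]
    exact ((hasDerivAt_one_add_rpow β h0).sub_const 1).sub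
      (by simpa using (hasDerivAt_id z).const_mul β)
  have hdf' : ∀ z ∈ Ioi (0:ℝ), HasDerivAt f' (f'' z) z := by
    intro z hz
    have h0 : (-1:ℝ) < z := by linarith [hz.out]
    have h := ((hasDerivAt_one_add_rpow (β-1) h0).const_mul β).sub_const β
    have he : β * ((β-1) * (1+z) ^ (β-1-1)) = f'' z := by
      rw [hf'', show β-1-1 = β-2 by ring]; ring
    rwa [he] at h
  have hdv : ∀ z ∈ Ioi (0:ℝ), HasDerivAt v (v' z) z := by
    intro z hz
    have h := (Real.hasDerivAt_rpow_const (x := z) (p := -α)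
      (Or.inl (ne_of_gt hz.out))).div_const (-α)
    have he : -α * z ^ (-α-1) / (-α) = v' z := by
      rw [hv', show -α-1 = -1-α by ring]
      field_simp
    rwa [he] at h
  have hdw : ∀ z ∈ Ioi (0:ℝ), HasDerivAt w (w' z) z := by
    intro z hz
    have h := (Real.hasDerivAt_rpow_const (x := z) (p := 1-α)
      (Or.inl (ne_of_gt hz.out))).div_const (1-α)
    have he : (1-α) * z ^ (1-α-1) / (1-α) = w' z := by
      rw [hw', show 1-α-1 = -α by ring]
      field_simp
    rwa [he] at h
  -- continuity
  have hcf : ContinuousOn f (Ioi 0) :=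
    ((cont_one_add_rpow β (fun x hx => le_of_lt hx.out)).sub continuousOn_const).sub
      (continuousOn_const.mul continuousOn_id)
  have hcf' : ContinuousOn f' (Ioi 0) :=
    (continuousOn_const.mul (cont_one_add_rpow (β-1) (fun x hx => le_of_lt hx.out))).sub
      continuousOn_const
  have hcrp : ∀ p : ℝ, ContinuousOn (fun z : ℝ => z ^ p) (Ioi 0) := fun p =>
    continuousOn_id.rpow_const (fun x hx => Or.inl (ne_of_gt hx.out))
  -- elementary bounds
  have hrpos : ∀ (z p : ℝ), 0 < z → (0:ℝ) ≤ z ^ p := fun z p hz => Real.rpow_nonneg hz.le p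
  have hmul1 : ∀ (z p : ℝ), 0 < z → z * z ^ p = z ^ (1+p) := by
    intro z p hz
    rw [Real.rpow_add hz, Real.rpow_one]
  have hmulrp : ∀ (z q p : ℝ), 0 < z → z ^ q * z ^ p = z ^ (q + p) :=
    fun z q p hz => (Real.rpow_add hz q p).symm
  have habsf : ∀ z : ℝ, 0 < z → |f z| ≤ z ^ (2:ℕ) := by
    intro z hz
    obtain ⟨h1, h2⟩ := f_bounds hβ₀ hβ (le_of_lt hz)
    rw [fapp z, abs_le]
    constructor
    · nlinarith
    · nlinarith [sq_nonneg z]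
  have habsf2 : ∀ z : ℝ, 1 < z → |f z| ≤ 2 * z := by
    intro z hz
    obtain ⟨h1, h2⟩ := f_bounds hβ₀ hβ (by linarith : (0:ℝ) ≤ z)
    have h3 : (0:ℝ) ≤ (1+z) ^ β := Real.rpow_nonneg (by linarith) _
    rw [fapp z, abs_le]
    constructor
    · nlinarith
    · nlinarith
  have habsf' : ∀ z : ℝ, 0 < z → |f' z| ≤ z ∧ |f' z| ≤ 1 := by
    intro z hz
    obtain ⟨h1, h2, h3⟩ := uprime_bounds hβ₀ hβ (le_of_lt hz)
    rw [f'app z]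
    constructor <;> rw [abs_le] <;> constructor <;> linarith
  have hvabs : ∀ z : ℝ, 0 < z → |v z| ≤ z ^ (-α) := by
    intro z hz
    rw [vapp z, abs_div, abs_of_nonneg (hrpos z _ hz), abs_neg, abs_of_pos hα0]
    exact div_le_self (hrpos z _ hz) hα₁.le
  have hwabs : ∀ z : ℝ, 0 < z → |w z| = z ^ (1-α) * (α-1)⁻¹ := by
    intro z hz
    rw [wapp z, abs_div, abs_of_nonneg (hrpos z _ hz), abs_of_neg (by linarith : (1:ℝ)-α < 0)]
    rw [show -(1-α) = α-1 by ring, div_eq_mul_inv]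
  -- integrability
  have hint1 : IntegrableOn (fun z : ℝ => f z * v' z) (Ioi 0) := by
    refine integrableOn_of_bounds (hcf.mul (hcrp _)) (p₁ := 1-α) (p₂ := -α)
      (C₁ := 1) (C₂ := 2) (by linarith) (by linarith) ?_ ?_
    · intro z hz
      have hz0 := hz.1
      rw [abs_mul, v'app z, abs_of_nonneg (hrpos z _ hz0), one_mul]
      calc |f z| * z ^ (-1-α) ≤ z ^ (2:ℕ) * z ^ (-1-α) :=
            mul_le_mul_of_nonneg_right (habsf z hz0) (hrpos z _ hz0)
        _ = z ^ (1-α) := by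
            rw [← Real.rpow_natCast z 2, hmulrp z _ _ hz0,
              show ((2:ℕ):ℝ) + (-1-α) = 1-α by push_cast; ring]
    · intro z hz
      have hz0 : (0:ℝ) < z := by linarith [hz.out]
      rw [abs_mul, v'app z, abs_of_nonneg (hrpos z _ hz0)]
      calc |f z| * z ^ (-1-α) ≤ (2 * z) * z ^ (-1-α) :=
            mul_le_mul_of_nonneg_right (habsf2 z hz.out) (hrpos z _ hz0)
        _ = 2 * z ^ (-α) := by
            rw [mul_assoc, hmul1 z _ hz0, show (1:ℝ) + (-1-α) = -α by ring]
  have hint2 : IntegrableOn (fun z : ℝ => f' z * w' z) (Ioi 0) := by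
    refine integrableOn_of_bounds (hcf'.mul (hcrp _)) (p₁ := 1-α) (p₂ := -α)
      (C₁ := 1) (C₂ := 1) (by linarith) (by linarith) ?_ ?_
    · intro z hz
      have hz0 := hz.1
      rw [abs_mul, w'app z, abs_of_nonneg (hrpos z _ hz0), one_mul]
      calc |f' z| * z ^ (-α) ≤ z * z ^ (-α) :=
            mul_le_mul_of_nonneg_right ((habsf' z hz0).1) (hrpos z _ hz0)
        _ = z ^ (1-α) := by
            rw [hmul1 z _ hz0, show (1:ℝ) + -α = 1-α by ring]
    · intro z hz
      have hz0 : (0:ℝ) < z := by linarith [hz.out]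
      rw [abs_mul, w'app z, abs_of_nonneg (hrpos z _ hz0), one_mul]
      calc |f' z| * z ^ (-α) ≤ 1 * z ^ (-α) :=
            mul_le_mul_of_nonneg_right ((habsf' z hz0).2) (hrpos z _ hz0)
        _ = z ^ (-α) := one_mul _
  have hfv : (fun z : ℝ => f' z * v z) = fun z : ℝ => (f' z * w' z) * (-α)⁻¹ := by
    funext z; rw [vapp z, w'app z, div_eq_mul_inv]; ring
  have hint2' : IntegrableOn (fun z : ℝ => f' z * v z) (Ioi 0) := by
    rw [hfv]; exact hint2.mul_const _
  -- Beta integral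
  have hab1 : (0:ℝ) < 2 - α := by linarith
  have hab2 : (0:ℝ) < α - β := by linarith
  have hbeta := betaIoi hab1 hab2
  rw [show (2 - α - 1 : ℝ) = 1 - α by ring, show (-(2 - α + (α - β)) : ℝ) = β - 2 by ring,
    show (2 - α + (α - β) : ℝ) = 2 - β by ring] at hbeta
  obtain ⟨hKval, hKint⟩ := hbeta
  have hgw : (fun z : ℝ => f'' z * w z)
      = fun z : ℝ => (z ^ (1-α) * (1+z) ^ (β-2)) * (β * (β-1) * (1-α)⁻¹) := by
    funext z; rw [f''app z, wapp z, div_eq_mul_inv]; ring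
  have hint3 : IntegrableOn (fun z : ℝ => f'' z * w z) (Ioi 0) := by
    rw [hgw]; exact hKint.mul_const _
  -- limits
  have hrtend0 : ∀ p : ℝ, 0 < p →
      Tendsto (fun z : ℝ => z ^ p) (nhdsWithin 0 (Ioi 0)) (nhds 0) := by
    intro p hp
    have h := (Real.continuousAt_rpow_const 0 p (Or.inr hp.le)).tendsto
    rw [Real.zero_rpow hp.ne'] at h
    exact h.mono_left nhdsWithin_le_nhds
  have hrtendtop : ∀ p : ℝ, p < 0 → Tendsto (fun z : ℝ => z ^ p) atTop (nhds 0) := by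
    intro p hp
    have h := tendsto_rpow_neg_atTop (y := -p) (by linarith)
    simpa using h
  have hlim0 : Tendsto (f * v) (nhdsWithin 0 (Ioi 0)) (nhds 0) := by
    refine squeeze_zero_norm' ?_ (hrtend0 (2-α) (by linarith))
    filter_upwards [Ioo_mem_nhdsGT_of_mem (Set.mem_Ico.mpr ⟨le_refl (0:ℝ), zero_lt_one⟩)]
      with z hz
    obtain ⟨hz0, hz1⟩ := hz
    rw [Pi.mul_apply, Real.norm_eq_abs, abs_mul]
    calc |f z| * |v z| ≤ z ^ (2:ℕ) * z ^ (-α) :=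
          mul_le_mul (habsf z hz0) (hvabs z hz0) (abs_nonneg _) (by positivity)
      _ = z ^ (2-α) := by
          rw [← Real.rpow_natCast z 2, hmulrp z _ _ hz0,
            show ((2:ℕ):ℝ) + (-α) = 2-α by push_cast; ring]
  have hlimtop : Tendsto (f * v) atTop (nhds 0) := by
    refine squeeze_zero_norm' ?_ (by simpa using (hrtendtop (1-α) (by linarith)).const_mul 2)
    filter_upwards [eventually_gt_atTop (1:ℝ)] with z hz
    have hz0 : (0:ℝ) < z := by linarith
    rw [Pi.mul_apply, Real.norm_eq_abs, abs_mul]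
    calc |f z| * |v z| ≤ (2*z) * z ^ (-α) :=
          mul_le_mul (habsf2 z hz) (hvabs z hz0) (abs_nonneg _) (by positivity)
      _ = 2 * z ^ (1-α) := by
          rw [mul_assoc, hmul1 z _ hz0, show (1:ℝ) + -α = 1-α by ring]
  have hlim0w : Tendsto (f' * w) (nhdsWithin 0 (Ioi 0)) (nhds 0) := by
    refine squeeze_zero_norm' ?_
      (by simpa using (hrtend0 (2-α) (by linarith)).mul_const (α-1)⁻¹)
    filter_upwards [Ioo_mem_nhdsGT_of_mem (Set.mem_Ico.mpr ⟨le_refl (0:ℝ), zero_lt_one⟩)]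
      with z hz
    obtain ⟨hz0, hz1⟩ := hz
    rw [Pi.mul_apply, Real.norm_eq_abs, abs_mul, hwabs z hz0, ← mul_assoc]
    refine mul_le_mul_of_nonneg_right ?_ (inv_nonneg.mpr (by linarith))
    calc |f' z| * z ^ (1-α) ≤ z * z ^ (1-α) :=
          mul_le_mul_of_nonneg_right ((habsf' z hz0).1) (hrpos z _ hz0)
      _ = z ^ (2-α) := by
          rw [hmul1 z _ hz0, show (1:ℝ) + (1-α) = 2-α by ring]
  have hlimtopw : Tendsto (f' * w) atTop (nhds 0) := by
    refine squeeze_zero_norm' ?_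
      (by simpa using (hrtendtop (1-α) (by linarith)).mul_const (α-1)⁻¹)
    filter_upwards [eventually_gt_atTop (1:ℝ)] with z hz
    have hz0 : (0:ℝ) < z := by linarith
    rw [Pi.mul_apply, Real.norm_eq_abs, abs_mul, hwabs z hz0, ← mul_assoc]
    refine mul_le_mul_of_nonneg_right ?_ (inv_nonneg.mpr (by linarith))
    calc |f' z| * z ^ (1-α) ≤ 1 * z ^ (1-α) :=
          mul_le_mul_of_nonneg_right ((habsf' z hz0).2) (hrpos z _ hz0)
      _ = z ^ (1-α) := one_mul _
  -- integration by parts, twice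
  have hpart1 : ∫ z in Ioi (0:ℝ), f z * v' z = 0 - 0 - ∫ z in Ioi (0:ℝ), f' z * v z :=
    integral_Ioi_mul_deriv_eq_deriv_mul hdf hdv hint1 hint2' hlim0 hlimtop
  have hpart2 : ∫ z in Ioi (0:ℝ), f' z * w' z = 0 - 0 - ∫ z in Ioi (0:ℝ), f'' z * w z :=
    integral_Ioi_mul_deriv_eq_deriv_mul hdf' hdw hint2 hint3 hlim0w hlimtopw
  have ea : ∫ z in Ioi (0:ℝ), f' z * v z = (∫ z in Ioi (0:ℝ), f' z * w' z) * (-α)⁻¹ := by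
    rw [hfv, integral_mul_const]
  have eb : ∫ z in Ioi (0:ℝ), f'' z * w z
      = (∫ t in Ioi (0:ℝ), t ^ (1-α) * (1+t) ^ (β-2)) * (β * (β-1) * (1-α)⁻¹) := by
    rw [hgw, integral_mul_const]
  -- final computation
  have hgoal : ∀ z : ℝ, ((1+z)^β - 1 - β*z) * (c * z^(-1-α)) = c * (f z * v' z) := by
    intro z; rw [fapp z, v'app z]; ring
  simp_rw [hgoal, MeasureTheory.integral_const_mul]
  rw [hpart1, ea, hpart2, eb, hKval]
  have hG1 : Real.Gamma α ≠ 0 := (Real.Gamma_pos_of_pos hα0).ne'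
  have hG2 : Real.Gamma (2-α) ≠ 0 := (Real.Gamma_pos_of_pos hab1).ne'
  have hG3 : Real.Gamma (2-β) ≠ 0 := (Real.Gamma_pos_of_pos (by linarith)).ne'
  rw [hc]
  field_simp
  ring
end

section
/- For all x, y > 0, ∫_0^∞ K¹_z g(x,y) μ_{α₁}(dz) = −(βδ(1−βδ)Γ(α₁−βδ)/(Γ(α₁)Γ(2−βδ))) x^{βδ−α₁} y^{−δ}. -/
open MeasureTheory Set Real

open intervalIntegral
open scoped ENNReal



lemma betaReal_integrable {a b : ℝ} (ha : 0 < a) (hb : 0 < b) :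
    IntegrableOn (fun u : ℝ => u ^ (a - 1) * (1 - u) ^ (b - 1)) (Ioo (0:ℝ) 1) := by
  have h := (Complex.betaIntegral_convergent (u := (a:ℂ)) (v := (b:ℂ)) (by simpa) (by simpa)).norm
  rw [intervalIntegrable_iff_integrableOn_Ioo_of_le zero_le_one] at h
  refine h.congr_fun (fun t ht => ?_) measurableSet_Ioo
  obtain ⟨ht0, ht1⟩ := ht
  beta_reduce
  rw [norm_mul]
  rw [Complex.norm_cpow_eq_rpow_re_of_pos (by exact_mod_cast ht0)]
  have : ((1:ℂ) - (t:ℂ)) = ((1 - t : ℝ) : ℂ) := by push_cast; ring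
  rw [this, Complex.norm_cpow_eq_rpow_re_of_pos (by linarith)]
  norm_num

lemma betaReal_value {a b : ℝ} (ha : 0 < a) (hb : 0 < b) :
    ∫ u in Ioo (0:ℝ) 1, u ^ (a - 1) * (1 - u) ^ (b - 1)
      = Real.Gamma a * Real.Gamma b / Real.Gamma (a + b) := by
  have h := Complex.Gamma_mul_Gamma_eq_betaIntegral (s := (a:ℂ)) (t := (b:ℂ)) (by simpa) (by simpa)
  have hbeta : Complex.betaIntegral (a:ℂ) (b:ℂ)
      = ((∫ u in Ioo (0:ℝ) 1, u ^ (a - 1) * (1 - u) ^ (b - 1) : ℝ) : ℂ) := by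
    rw [Complex.betaIntegral, intervalIntegral.integral_of_le zero_le_one,
      integral_Ioc_eq_integral_Ioo]
    calc ∫ t in Ioo (0:ℝ) 1, (t:ℂ) ^ ((a:ℂ) - 1) * (1 - (t:ℂ)) ^ ((b:ℂ) - 1)
        = ∫ t in Ioo (0:ℝ) 1, ((t ^ (a - 1) * (1 - t) ^ (b - 1) : ℝ) : ℂ) := by
          refine setIntegral_congr_fun measurableSet_Ioo (fun t ht => ?_)
          obtain ⟨ht0, ht1⟩ := ht
          have e1 : ((a:ℂ) - 1) = ((a - 1 : ℝ) : ℂ) := by push_cast; ring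
          have e2 : ((b:ℂ) - 1) = ((b - 1 : ℝ) : ℂ) := by push_cast; ring
          have e3 : ((1:ℂ) - (t:ℂ)) = ((1 - t : ℝ) : ℂ) := by push_cast; ring
          rw [e1, e2, e3, Complex.ofReal_mul, ← Complex.ofReal_cpow ht0.le,
            ← Complex.ofReal_cpow (by linarith)]
      _ = _ := integral_ofReal
  rw [hbeta, ← Complex.ofReal_add, Complex.Gamma_ofReal, Complex.Gamma_ofReal,
    Complex.Gamma_ofReal] at h
  have hG : Real.Gamma (a + b) ≠ 0 := (Real.Gamma_pos_of_pos (by linarith)).ne'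
  have : Real.Gamma a * Real.Gamma b
      = Real.Gamma (a + b) * ∫ u in Ioo (0:ℝ) 1, u ^ (a - 1) * (1 - u) ^ (b - 1) := by
    exact_mod_cast h
  rw [this]; field_simp


section
variable {x p q : ℝ}

lemma subst_pointwise (hx : 0 < x) {u : ℝ} (hu : u ∈ Ioo (0:ℝ) 1) :
    |x / (1 - u) ^ 2| • ((x * u / (1 - u)) ^ (p - 1) * (x + x * u / (1 - u)) ^ (-(p + q)))
      = x ^ (-q) * (u ^ (p - 1) * (1 - u) ^ (q - 1)) := by
  obtain ⟨hu0, hu1⟩ := hu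
  have h1u : (0:ℝ) < 1 - u := by linarith
  have e0 : x + x * u / (1 - u) = x / (1 - u) := by field_simp; ring
  rw [smul_eq_mul, e0, abs_of_pos (by positivity)]
  rw [Real.div_rpow hx.le h1u.le, Real.div_rpow (mul_pos hx hu0).le h1u.le,
    Real.mul_rpow hx.le hu0.le]
  rw [show (x / (1 - u) ^ 2) = x * ((1-u)^2)⁻¹ by ring,
    show (((1-u)^2)⁻¹ : ℝ) = (1-u) ^ (-2:ℝ) by
      rw [← Real.rpow_natCast (1-u) 2, ← Real.rpow_neg h1u.le]; norm_num]
  rw [div_eq_mul_inv, div_eq_mul_inv, ← Real.rpow_neg h1u.le, ← Real.rpow_neg h1u.le]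
  rw [show (-q:ℝ) = 1 + (p-1) + (-(p+q)) by ring,
    show (q-1:ℝ) = (-2:ℝ) + (-(p-1)) + (p+q) by ring,
    Real.rpow_add hx, Real.rpow_add hx, Real.rpow_add h1u, Real.rpow_add h1u, Real.rpow_one,
    neg_neg]
  ring

lemma subst_img (hx : 0 < x) : (fun u : ℝ => x * u / (1 - u)) '' Ioo 0 1 = Ioi 0 := by
  ext t
  constructor
  · rintro ⟨u, ⟨hu0, hu1⟩, rfl⟩
    exact div_pos (mul_pos hx hu0) (by linarith)
  · intro ht
    have ht' : (0:ℝ) < t := ht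
    have hxt : (0:ℝ) < x + t := by linarith
    refine ⟨t / (x + t), ⟨div_pos ht' hxt, (div_lt_one hxt).2 (by linarith)⟩, ?_⟩
    field_simp
    simp [hx.ne']

lemma subst_deriv (hx : 0 < x) : ∀ u ∈ Ioo (0:ℝ) 1,
    HasDerivWithinAt (fun u : ℝ => x * u / (1 - u)) (x / (1 - u) ^ 2) (Ioo (0:ℝ) 1) u := by
  intro u ⟨hu0, hu1⟩
  have h1u : (1:ℝ) - u ≠ 0 := by intro h; linarith [h]
  have h := (((hasDerivAt_id u).const_mul x).div ((hasDerivAt_id u).const_sub 1) h1u)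
  exact h.hasDerivWithinAt.congr_deriv (by simp only [id]; ring)

lemma subst_inj (hx : 0 < x) : InjOn (fun u : ℝ => x * u / (1 - u)) (Ioo 0 1) := by
  rintro u ⟨hu0, hu1⟩ v ⟨hv0, hv1⟩ h
  simp only at h
  have h1u : (1:ℝ) - u ≠ 0 := by intro h'; linarith
  have h1v : (1:ℝ) - v ≠ 0 := by intro h'; linarith
  field_simp at h
  have h2 : u * (1 - v) = v * (1 - u) := mul_left_cancel₀ hx.ne' (by rw [h]; ring)
  nlinarith [h2]

lemma beta_Ioi_value (hx : 0 < x) (hp : 0 < p) (hq : 0 < q) :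
    ∫ w in Ioi (0:ℝ), w ^ (p - 1) * (x + w) ^ (-(p + q))
      = x ^ (-q) * (Real.Gamma p * Real.Gamma q / Real.Gamma (p + q)) := by
  rw [← subst_img hx,
    integral_image_eq_integral_abs_deriv_smul measurableSet_Ioo (subst_deriv hx) (subst_inj hx)]
  rw [show (∫ u in Ioo (0:ℝ) 1, |x / (1-u)^2| •
        ((x * u / (1-u)) ^ (p-1) * (x + x * u / (1-u)) ^ (-(p+q))))
      = ∫ u in Ioo (0:ℝ) 1, x ^ (-q) * (u ^ (p-1) * (1-u) ^ (q-1)) from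
    setIntegral_congr_fun measurableSet_Ioo (fun u hu => subst_pointwise hx hu)]
  rw [MeasureTheory.integral_const_mul, betaReal_value hp hq]

lemma beta_Ioi_integrable (hx : 0 < x) (hp : 0 < p) (hq : 0 < q) :
    IntegrableOn (fun w : ℝ => w ^ (p - 1) * (x + w) ^ (-(p + q))) (Ioi 0) := by
  rw [← subst_img hx,
    integrableOn_image_iff_integrableOn_abs_deriv_smul measurableSet_Ioo (subst_deriv hx)
      (subst_inj hx)]
  refine (IntegrableOn.congr_fun ?_ (fun u hu => (subst_pointwise hx hu).symm) measurableSet_Ioo)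
  exact (betaReal_integrable hp hq).const_mul _

end

lemma taylor_int {s x : ℝ} (hs0 : 0 < s) (hs1 : s < 1) (hx : 0 < x) {z : ℝ} (hz : 0 ≤ z) :
    s * (s - 1) * ∫ w in (0:ℝ)..z, (x + w) ^ (s - 2) * (z - w)
      = (x + z) ^ s - x ^ s - s * x ^ (s - 1) * z := by
  have hu : Set.uIcc (0:ℝ) z = Set.Icc 0 z := Set.uIcc_of_le hz
  have hpos : ∀ w ∈ Set.uIcc (0:ℝ) z, 0 < x + w := by
    rw [hu]; intro w hw; have := hw.1; linarith
  have hcontA : IntervalIntegrable (fun w => (x + w) ^ (s - 2)) volume 0 z := by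
    apply ContinuousOn.intervalIntegrable
    exact ((continuous_const.add continuous_id).continuousOn).rpow_const
      (fun w hw => Or.inl (hpos w hw).ne')
  have hcontB : IntervalIntegrable (fun w => (x + w) ^ (s - 1)) volume 0 z := by
    apply ContinuousOn.intervalIntegrable
    exact ((continuous_const.add continuous_id).continuousOn).rpow_const
      (fun w hw => Or.inl (hpos w hw).ne')
  have hA : ∫ w in (0:ℝ)..z, (x + w) ^ (s - 2)
      = ((x + z) ^ (s - 1) - x ^ (s - 1)) / (s - 1) := by
    rw [show (fun w => (x + w) ^ (s - 2)) = fun w => (fun t => t ^ (s - 2)) (x + w) from rfl,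
      integral_comp_add_left (fun t => t ^ (s - 2)) x, add_zero,
      integral_rpow (Or.inr ⟨by intro h; rw [sub_eq_iff_eq_add] at h; norm_num at h; linarith,
        notMem_uIcc_of_lt hx (by linarith)⟩),
      show s - 2 + 1 = s - 1 by ring]
  have hB : ∫ w in (0:ℝ)..z, (x + w) ^ (s - 1) = ((x + z) ^ s - x ^ s) / s := by
    rw [show (fun w => (x + w) ^ (s - 1)) = fun w => (fun t => t ^ (s - 1)) (x + w) from rfl,
      integral_comp_add_left (fun t => t ^ (s - 1)) x, add_zero,
      integral_rpow (Or.inl (by linarith)),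
      show s - 1 + 1 = s by ring]
  have hcong : ∫ w in (0:ℝ)..z, (x + w) ^ (s - 2) * (z - w)
      = ∫ w in (0:ℝ)..z, ((x + z) * (x + w) ^ (s - 2) - (x + w) ^ (s - 1)) := by
    apply integral_congr
    intro w hw
    have hxw := hpos w hw
    show (x + w) ^ (s - 2) * (z - w) = (x + z) * (x + w) ^ (s - 2) - (x + w) ^ (s - 1)
    rw [show s - 1 = (s - 2) + 1 by ring, Real.rpow_add_one hxw.ne']
    ring
  rw [hcong, integral_sub ((hcontA.const_mul _)) hcontB, intervalIntegral.integral_const_mul, hA, hB]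
  have hxz : (0:ℝ) < x + z := by linarith
  have e1 : (x + z) * (x + z) ^ (s - 1) = (x + z) ^ s := by
    rw [Real.rpow_sub_one hxz.ne']; field_simp
  have e2 : x * x ^ (s - 1) = x ^ s := by
    rw [Real.rpow_sub_one hx.ne']; field_simp
  have hs0' : s ≠ 0 := hs0.ne'
  have hs1' : s - 1 ≠ 0 := sub_ne_zero.mpr hs1.ne
  field_simp
  linear_combination s * e1 - s * e2

lemma inner_z_integrable {α w : ℝ} (hα1 : 1 < α) (hw : 0 < w) :
    IntegrableOn (fun z : ℝ => (z - w) * z ^ (-1 - α)) (Ioi w) := by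
  have hI1 : IntegrableOn (fun z : ℝ => z ^ (-α)) (Ioi w) :=
    integrableOn_Ioi_rpow_of_lt (by linarith) hw
  have hI2 : IntegrableOn (fun z : ℝ => z ^ (-1 - α)) (Ioi w) :=
    integrableOn_Ioi_rpow_of_lt (by linarith) hw
  have h3 : IntegrableOn (fun z : ℝ => z ^ (-α) - w * z ^ (-1 - α)) (Ioi w) :=
    hI1.sub (hI2.const_mul w)
  refine h3.congr_fun (fun z hz => ?_) measurableSet_Ioi
  have hz0 : (0:ℝ) < z := hw.trans hz
  beta_reduce
  rw [show (-α) = (-1 - α) + 1 by ring, Real.rpow_add_one hz0.ne']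
  ring

lemma inner_z_value {α w : ℝ} (hα1 : 1 < α) (hw : 0 < w) :
    ∫ z in Ioi w, (z - w) * z ^ (-1 - α) = w ^ (1 - α) / (α * (α - 1)) := by
  have hI1 : IntegrableOn (fun z : ℝ => z ^ (-α)) (Ioi w) :=
    integrableOn_Ioi_rpow_of_lt (by linarith) hw
  have hI2 : IntegrableOn (fun z : ℝ => z ^ (-1 - α)) (Ioi w) :=
    integrableOn_Ioi_rpow_of_lt (by linarith) hw
  have hcong : ∫ z in Ioi w, (z - w) * z ^ (-1 - α)
      = ∫ z in Ioi w, (z ^ (-α) - w * z ^ (-1 - α)) := by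
    refine setIntegral_congr_fun measurableSet_Ioi (fun z hz => ?_)
    have hz0 : (0:ℝ) < z := hw.trans hz
    rw [show (-α) = (-1 - α) + 1 by ring, Real.rpow_add_one hz0.ne']
    ring
  rw [hcong, integral_sub hI1 (hI2.const_mul w), MeasureTheory.integral_const_mul,
    integral_Ioi_rpow_of_lt (by linarith) hw, integral_Ioi_rpow_of_lt (by linarith) hw]
  have e : w ^ (1 - α) = w ^ (-1 - α + 1) * w := by
    rw [show (1 - α) = (-1 - α + 1) + 1 by ring]
    exact Real.rpow_add_one hw.ne' _
  have hα0 : α ≠ 0 := by linarith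
  have hα1' : α - 1 ≠ 0 := by intro h; linarith [h]
  have hne1 : (-α + 1 : ℝ) ≠ 0 := by intro h; apply hα1'; linarith [h]
  have hne2 : (-1 - α + 1 : ℝ) ≠ 0 := by intro h; apply hα0; linarith [h]
  have e2 : w ^ (-α + 1) = w ^ (1 - α) := by rw [show (-α + 1 : ℝ) = 1 - α by ring]
  field_simp
  linear_combination (α^3 - 2*α^2 + α) * e + (α^3 - α^2) * e2

lemma key_integral {s α x : ℝ} (hs0 : 0 < s) (hs1 : s < 1) (hα1 : 1 < α) (hα2 : α < 2)
    (hx : 0 < x) :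
    ∫ z in Ioi (0:ℝ), ((x + z) ^ s - x ^ s - s * x ^ (s - 1) * z) * z ^ (-1 - α)
      = s * (s - 1) / (α * (α - 1))
          * (Real.Gamma (2 - α) * Real.Gamma (α - s) / Real.Gamma (2 - s)) * x ^ (s - α) := by
  have hc : (0:ℝ) ≤ s * (1 - s) := by nlinarith
  have hαα : (0:ℝ) < α * (α - 1) := by nlinarith
  have hg1 : 0 < Real.Gamma (2 - α) := Real.Gamma_pos_of_pos (by linarith)
  have hg2 : 0 < Real.Gamma (α - s) := Real.Gamma_pos_of_pos (by linarith)
  have hg3 : 0 < Real.Gamma (2 - s) := Real.Gamma_pos_of_pos (by linarith)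
  set G : ℝ := Real.Gamma (2 - α) * Real.Gamma (α - s) / Real.Gamma (2 - s) with hG
  have hG0 : 0 < G := div_pos (mul_pos hg1 hg2) hg3
  have hmeasN : Measurable (fun z : ℝ =>
      (x ^ s + s * x ^ (s - 1) * z - (x + z) ^ s) * z ^ (-1 - α)) := by
    exact ((measurable_const.add (measurable_id'.const_mul (s * x ^ (s - 1)))).sub
      ((measurable_id'.const_add x).pow measurable_const)).mul
      (measurable_id'.pow measurable_const)
  set S : Set (ℝ × ℝ) := {p | 0 < p.2} ∩ {p | p.2 < p.1} with hSdef
  have hS : MeasurableSet S :=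
    (measurableSet_lt measurable_const measurable_snd).inter
      (measurableSet_lt measurable_snd measurable_fst)
  set F : ℝ × ℝ → ℝ := fun p => (x + p.2) ^ (s - 2) * (p.1 - p.2) * p.1 ^ (-1 - α) with hFdef
  have hF : Measurable F :=
    (((measurable_snd.const_add x).pow measurable_const).mul
      (measurable_fst.sub measurable_snd)).mul (measurable_fst.pow measurable_const)
  set H : ℝ × ℝ → ℝ≥0∞ := S.indicator (fun p => ENNReal.ofReal (F p)) with hHdef
  have hH : Measurable H := (hF.ennreal_ofReal).indicator hS
  -- Step 1: inner integral in w for fixed z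
  have step1 : ∀ z ∈ Ioi (0:ℝ), (∫⁻ w in Ioi (0:ℝ), H (z, w))
      = ENNReal.ofReal ((∫ w in (0:ℝ)..z, (x + w) ^ (s - 2) * (z - w)) * z ^ (-1 - α)) := by
    intro z hz
    have hz0 : (0:ℝ) < z := hz
    have hind : (fun w => H (z, w)) = fun w => (Ioo (0:ℝ) z).indicator
        (fun w => ENNReal.ofReal ((x + w) ^ (s - 2) * (z - w) * z ^ (-1 - α))) w := by
      funext w
      rw [hHdef]
      by_cases hw : w ∈ Ioo (0:ℝ) z
      · rw [Set.indicator_of_mem hw,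
          Set.indicator_of_mem (show (z, w) ∈ S from ⟨hw.1, hw.2⟩)]
      · rw [Set.indicator_of_notMem hw,
          Set.indicator_of_notMem (show (z, w) ∉ S from fun hmem => hw ⟨hmem.1, hmem.2⟩)]
    rw [hind, lintegral_indicator measurableSet_Ioo,
      Measure.restrict_restrict measurableSet_Ioo,
      Set.inter_eq_left.mpr Set.Ioo_subset_Ioi_self]
    have hint : IntegrableOn (fun w => (x + w) ^ (s - 2) * (z - w) * z ^ (-1 - α)) (Ioo 0 z) := by
      have h1 : IntervalIntegrable
          (fun w => (x + w) ^ (s - 2) * (z - w) * z ^ (-1 - α)) volume 0 z := by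
        apply ContinuousOn.intervalIntegrable
        apply ContinuousOn.mul (ContinuousOn.mul ?_
          (continuous_const.sub continuous_id).continuousOn) continuousOn_const
        apply ((continuous_const.add continuous_id).continuousOn).rpow_const
        intro w hw
        rw [Set.uIcc_of_le hz0.le] at hw
        exact Or.inl (by nlinarith [hw.1] : (0:ℝ) < x + w).ne'
      rwa [intervalIntegrable_iff_integrableOn_Ioo_of_le hz0.le] at h1
    have hnn : 0 ≤ᵐ[volume.restrict (Ioo (0:ℝ) z)]
        (fun w => (x + w) ^ (s - 2) * (z - w) * z ^ (-1 - α)) := by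
      refine ae_restrict_of_forall_mem measurableSet_Ioo (fun w hw => ?_)
      exact mul_nonneg (mul_nonneg (Real.rpow_nonneg (by nlinarith [hw.1]) _)
        (by linarith [hw.2])) (Real.rpow_nonneg hz0.le _)
    rw [← ofReal_integral_eq_lintegral_ofReal hint hnn]
    congr 1
    rw [intervalIntegral.integral_of_le hz0.le, integral_Ioc_eq_integral_Ioo,
      ← MeasureTheory.integral_mul_const]
  -- Step 2: inner integral in z for fixed w
  have step2 : ∀ w ∈ Ioi (0:ℝ), (∫⁻ z in Ioi (0:ℝ), H (z, w))
      = ENNReal.ofReal ((x + w) ^ (s - 2) * (w ^ (1 - α) / (α * (α - 1)))) := by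
    intro w hw
    have hw0 : (0:ℝ) < w := hw
    have hind : (fun z => H (z, w)) = fun z => (Ioi w).indicator
        (fun z => ENNReal.ofReal ((x + w) ^ (s - 2) * ((z - w) * z ^ (-1 - α)))) z := by
      funext z
      rw [hHdef]
      by_cases hz : z ∈ Ioi w
      · rw [Set.indicator_of_mem hz,
          Set.indicator_of_mem (show (z, w) ∈ S from ⟨hw0, hz⟩)]
        simp only [hFdef]
        congr 1
        ring
      · rw [Set.indicator_of_notMem hz,
          Set.indicator_of_notMem (show (z, w) ∉ S from fun hmem => hz hmem.2)]
    rw [hind, lintegral_indicator measurableSet_Ioi,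
      Measure.restrict_restrict measurableSet_Ioi,
      Set.inter_eq_left.mpr (Set.Ioi_subset_Ioi hw0.le)]
    have hint : IntegrableOn (fun z => (x + w) ^ (s - 2) * ((z - w) * z ^ (-1 - α))) (Ioi w) :=
      (inner_z_integrable hα1 hw0).const_mul _
    have hnn : 0 ≤ᵐ[volume.restrict (Ioi w)]
        (fun z => (x + w) ^ (s - 2) * ((z - w) * z ^ (-1 - α))) := by
      refine ae_restrict_of_forall_mem measurableSet_Ioi (fun z hz => ?_)
      have hz0 : (0:ℝ) < z := hw0.trans hz
      exact mul_nonneg (Real.rpow_nonneg (by linarith) _)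
        (mul_nonneg (by linarith [mem_Ioi.mp hz]) (Real.rpow_nonneg hz0.le _))
    rw [← ofReal_integral_eq_lintegral_ofReal hint hnn]
    congr 1
    rw [MeasureTheory.integral_const_mul, inner_z_value hα1 hw0]
  -- Step 3: the outer w-integral
  have hbetaInt : IntegrableOn
      (fun w : ℝ => (x + w) ^ (s - 2) * (w ^ (1 - α) / (α * (α - 1)))) (Ioi 0) := by
    have h : IntegrableOn
        (fun w : ℝ => w ^ ((2 - α) - 1) * (x + w) ^ (-((2 - α) + (α - s))) * (1 / (α * (α - 1))))
        (Ioi 0) := (beta_Ioi_integrable hx (p := 2 - α) (q := α - s)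
      (by linarith) (by linarith)).mul_const (1 / (α * (α - 1)))
    refine h.congr_fun (fun w hw => ?_) measurableSet_Ioi
    rw [show (2 - α) - 1 = 1 - α by ring, show -((2 - α) + (α - s)) = s - 2 by ring]
    ring
  have hbetaVal : ∫ w in Ioi (0:ℝ), (x + w) ^ (s - 2) * (w ^ (1 - α) / (α * (α - 1)))
      = x ^ (s - α) * G / (α * (α - 1)) := by
    have hcong : ∫ w in Ioi (0:ℝ), (x + w) ^ (s - 2) * (w ^ (1 - α) / (α * (α - 1)))
        = ∫ w in Ioi (0:ℝ),
            (w ^ ((2 - α) - 1) * (x + w) ^ (-((2 - α) + (α - s)))) * (1 / (α * (α - 1))) := by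
      refine setIntegral_congr_fun measurableSet_Ioi (fun w hw => ?_)
      rw [show (2 - α) - 1 = 1 - α by ring, show -((2 - α) + (α - s)) = s - 2 by ring]
      ring
    rw [hcong, MeasureTheory.integral_mul_const, beta_Ioi_value hx (by linarith) (by linarith),
      show (2 - α) + (α - s) = 2 - s by ring, show -(α - s) = s - α by ring, hG]
    ring
  have hnn3 : 0 ≤ᵐ[volume.restrict (Ioi (0:ℝ))]
      (fun w : ℝ => (x + w) ^ (s - 2) * (w ^ (1 - α) / (α * (α - 1)))) := by
    refine ae_restrict_of_forall_mem measurableSet_Ioi (fun w hw => ?_)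
    have hw0 : (0:ℝ) < w := hw
    exact mul_nonneg (Real.rpow_nonneg (by linarith) _)
      (div_nonneg (Real.rpow_nonneg hw0.le _) hαα.le)
  -- Step 4: Tonelli
  have hswap : ∫⁻ z in Ioi (0:ℝ), ∫⁻ w in Ioi (0:ℝ), H (z, w)
      = ∫⁻ w in Ioi (0:ℝ), ∫⁻ z in Ioi (0:ℝ), H (z, w) :=
    lintegral_lintegral_swap hH.aemeasurable
  -- Taylor nonneg form
  have hTnn : ∀ z : ℝ, 0 < z → 0 ≤ ∫ w in (0:ℝ)..z, (x + w) ^ (s - 2) * (z - w) := by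
    intro z hz
    refine intervalIntegral.integral_nonneg hz.le (fun w hw => ?_)
    exact mul_nonneg (Real.rpow_nonneg (by nlinarith [hw.1]) _) (by linarith [hw.2])
  have hNform : ∀ z ∈ Ioi (0:ℝ), (x ^ s + s * x ^ (s - 1) * z - (x + z) ^ s) * z ^ (-1 - α)
      = (s * (1 - s)) * ((∫ w in (0:ℝ)..z, (x + w) ^ (s - 2) * (z - w)) * z ^ (-1 - α)) := by
    intro z hz
    have ht := taylor_int hs0 hs1 hx (le_of_lt (mem_Ioi.mp hz))
    linear_combination z ^ (-1 - α) * ht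
  -- Main computation
  have hmain : ∫ z in Ioi (0:ℝ), (x ^ s + s * x ^ (s - 1) * z - (x + z) ^ s) * z ^ (-1 - α)
      = (s * (1 - s)) * (x ^ (s - α) * G / (α * (α - 1))) := by
    rw [integral_eq_lintegral_of_nonneg_ae
      (ae_restrict_of_forall_mem measurableSet_Ioi (fun z hz => by
        rw [hNform z hz]
        exact mul_nonneg hc (mul_nonneg (hTnn z hz) (Real.rpow_nonneg (le_of_lt hz) _))))
      hmeasN.aestronglyMeasurable]
    have hl : ∫⁻ z in Ioi (0:ℝ),
        ENNReal.ofReal ((x ^ s + s * x ^ (s - 1) * z - (x + z) ^ s) * z ^ (-1 - α))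
        = ENNReal.ofReal (s * (1 - s)) * ENNReal.ofReal (x ^ (s - α) * G / (α * (α - 1))) := by
      calc ∫⁻ z in Ioi (0:ℝ),
          ENNReal.ofReal ((x ^ s + s * x ^ (s - 1) * z - (x + z) ^ s) * z ^ (-1 - α))
          = ∫⁻ z in Ioi (0:ℝ), ENNReal.ofReal (s * (1 - s)) * (∫⁻ w in Ioi (0:ℝ), H (z, w)) := by
            refine setLIntegral_congr_fun measurableSet_Ioi (fun z hz => ?_)
            rw [hNform z hz, ENNReal.ofReal_mul hc, step1 z hz]
        _ = ENNReal.ofReal (s * (1 - s)) * ∫⁻ z in Ioi (0:ℝ), ∫⁻ w in Ioi (0:ℝ), H (z, w) :=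
            lintegral_const_mul' _ _ ENNReal.ofReal_ne_top
        _ = ENNReal.ofReal (s * (1 - s)) * ∫⁻ w in Ioi (0:ℝ), ∫⁻ z in Ioi (0:ℝ), H (z, w) := by
            rw [hswap]
        _ = ENNReal.ofReal (s * (1 - s)) * ∫⁻ w in Ioi (0:ℝ),
              ENNReal.ofReal ((x + w) ^ (s - 2) * (w ^ (1 - α) / (α * (α - 1)))) := by
            rw [setLIntegral_congr_fun measurableSet_Ioi step2]
        _ = ENNReal.ofReal (s * (1 - s)) * ENNReal.ofReal (x ^ (s - α) * G / (α * (α - 1))) := by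
            rw [← ofReal_integral_eq_lintegral_ofReal hbetaInt hnn3, hbetaVal]
    rw [hl, ← ENNReal.ofReal_mul hc, ENNReal.toReal_ofReal]
    exact mul_nonneg hc (div_nonneg (mul_nonneg (Real.rpow_nonneg hx.le _) hG0.le) hαα.le)
  calc ∫ z in Ioi (0:ℝ), ((x + z) ^ s - x ^ s - s * x ^ (s - 1) * z) * z ^ (-1 - α)
      = ∫ z in Ioi (0:ℝ), -((x ^ s + s * x ^ (s - 1) * z - (x + z) ^ s) * z ^ (-1 - α)) := by
        refine integral_congr_ae (ae_of_all _ (fun z => by ring))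
    _ = -∫ z in Ioi (0:ℝ), (x ^ s + s * x ^ (s - 1) * z - (x + z) ^ s) * z ^ (-1 - α) :=
        integral_neg _
    _ = _ := by rw [hmain, hG]; ring

/-- Lemma 3.10, identity (3.33): for `g(x,y) = x^{βδ} y^{−δ} + y^ρ` and
`K¹_z g(x,y) = g(x+z,y) − g(x,y) − ∂_x g(x,y) z`, for all `x, y > 0`,
`∫_0^∞ K¹_z g(x,y) μ_{α₁}(dz)
  = −(βδ(1−βδ)Γ(α₁−βδ)/(Γ(α₁)Γ(2−βδ))) x^{βδ−α₁} y^{−δ}`. -/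
theorem K1_integral_eq (α₁ β δ ρ : ℝ) (hα₁ : 1 < α₁) (hα₂ : α₁ < 2)
    (hβ : 0 < β) (hδ₀ : 0 < δ) (hδ : δ < 1 / β) (hρ₀ : 0 < ρ) (hρ : ρ < 1)
    (x y : ℝ) (hx : 0 < x) (hy : 0 < y) :
    ∫ z in Ioi (0 : ℝ),
        ((x + z) ^ (β * δ) * y ^ (-δ) + y ^ ρ - (x ^ (β * δ) * y ^ (-δ) + y ^ ρ)
            - deriv (fun x' : ℝ => x' ^ (β * δ) * y ^ (-δ) + y ^ ρ) x * z) *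
          (α₁ * (α₁ - 1) / (Real.Gamma α₁ * Real.Gamma (2 - α₁)) * z ^ (-1 - α₁))
      = -(β * δ * (1 - β * δ) * Real.Gamma (α₁ - β * δ)
            / (Real.Gamma α₁ * Real.Gamma (2 - β * δ))) * x ^ (β * δ - α₁) * y ^ (-δ) := by
  have hs0 : 0 < β * δ := mul_pos hβ hδ₀
  have hs1 : β * δ < 1 := by
    have := (lt_div_iff₀ hβ).mp hδ
    linarith [this]
  have hd : HasDerivAt (fun x' : ℝ => x' ^ (β * δ) * y ^ (-δ) + y ^ ρ)
      ((β * δ * x ^ (β * δ - 1)) * y ^ (-δ)) x :=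
    ((Real.hasDerivAt_rpow_const (Or.inl hx.ne')).mul_const (y ^ (-δ))).add_const (y ^ ρ)
  have hderiv : deriv (fun x' : ℝ => x' ^ (β * δ) * y ^ (-δ) + y ^ ρ) x
      = (β * δ * x ^ (β * δ - 1)) * y ^ (-δ) := hd.deriv
  have hg1 : 0 < Real.Gamma α₁ := Real.Gamma_pos_of_pos (by linarith)
  have hg2 : 0 < Real.Gamma (2 - α₁) := Real.Gamma_pos_of_pos (by linarith)
  have hg3 : 0 < Real.Gamma (2 - β * δ) := Real.Gamma_pos_of_pos (by linarith)
  have hαα : (0:ℝ) < α₁ * (α₁ - 1) := by nlinarith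
  calc ∫ z in Ioi (0 : ℝ),
        ((x + z) ^ (β * δ) * y ^ (-δ) + y ^ ρ - (x ^ (β * δ) * y ^ (-δ) + y ^ ρ)
            - deriv (fun x' : ℝ => x' ^ (β * δ) * y ^ (-δ) + y ^ ρ) x * z) *
          (α₁ * (α₁ - 1) / (Real.Gamma α₁ * Real.Gamma (2 - α₁)) * z ^ (-1 - α₁))
      = ∫ z in Ioi (0 : ℝ),
          (y ^ (-δ) * (α₁ * (α₁ - 1) / (Real.Gamma α₁ * Real.Gamma (2 - α₁))))
            * (((x + z) ^ (β * δ) - x ^ (β * δ) - β * δ * x ^ (β * δ - 1) * z)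
                * z ^ (-1 - α₁)) := by
        refine integral_congr_ae (Filter.Eventually.of_forall (fun z => ?_))
        rw [hderiv]
        ring
    _ = (y ^ (-δ) * (α₁ * (α₁ - 1) / (Real.Gamma α₁ * Real.Gamma (2 - α₁))))
          * ∫ z in Ioi (0 : ℝ),
            ((x + z) ^ (β * δ) - x ^ (β * δ) - β * δ * x ^ (β * δ - 1) * z)
              * z ^ (-1 - α₁) := MeasureTheory.integral_const_mul _ _
    _ = _ := by
        rw [key_integral hs0 hs1 hα₁ hα₂ hx]
        have hα1' : α₁ - 1 ≠ 0 := (by linarith : (0:ℝ) < α₁ - 1).ne'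
        field_simp
        ring
end
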